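/- Tumula information of pure states (Theorem 2(c)): Let A and B be nonempty finite types and ψ : A × B → ℂ a unit vector (∑ (a,b), ‖ψ (a,b)‖² = 1), and let ρ_AB be the pure state with entries ρ_AB (a,b) (a',b') := ψ (a,b) · conj (ψ (a',b')). (i) If there exist u : A → ℂ and v : B → ℂ with ψ (a,b) = u a · v b for all a, b, then T(A:B)_ρ = 0. (ii) If no such u, v exist, then D(σ_A ⊗ τ_B ‖ ρ_AB) = +∞ for every state σ_A on A and every state τ_B on B, i.e., T(A:B)_ρ = +∞. -/

import Mathlib

open scoped BigOperators Kronecker ComplexOrder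
open scoped Matrix

noncomputable section

/-- Matrix power on the support via spectral decomposition (convention `0 ^ p = 0`);
junk value `0` for non-Hermitian matrices. -/
noncomputable def mpow {A : Type*} [Fintype A] [DecidableEq A] (X : Matrix A A ℂ) (p : ℝ) :
    Matrix A A ℂ :=
  if h : X.IsHermitian then
    (h.eigenvectorUnitary : Matrix A A ℂ) *
      Matrix.diagonal (fun i =>
        ((if h.eigenvalues i = 0 then (0 : ℝ) else (h.eigenvalues i) ^ p : ℝ) : ℂ)) *
      (star (h.eigenvectorUnitary : Matrix A A ℂ))
  else 0

/-- Matrix logarithm via spectral decomposition (`Real.log 0 = 0`); junk value `0`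
for non-Hermitian matrices. -/
noncomputable def mlog {A : Type*} [Fintype A] [DecidableEq A] (X : Matrix A A ℂ) :
    Matrix A A ℂ :=
  if h : X.IsHermitian then
    (h.eigenvectorUnitary : Matrix A A ℂ) *
      Matrix.diagonal (fun i => ((Real.log (h.eigenvalues i) : ℝ) : ℂ)) *
      (star (h.eigenvectorUnitary : Matrix A A ℂ))
  else 0

/-- A quantum state: a positive semidefinite matrix with unit trace. -/
structure MState (A : Type*) [Fintype A] [DecidableEq A] where
  mat : Matrix A A ℂ
  posSemidef : mat.PosSemidef
  trace_one : mat.trace = 1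

/-- `Q_α(ρ‖σ) = Tr[ρ^α σ^(1-α)]`. -/
noncomputable def QRenyi {A : Type*} [Fintype A] [DecidableEq A] (α : ℝ)
    (ρ σ : Matrix A A ℂ) : ℝ :=
  ((mpow ρ α * mpow σ (1 - α)).trace).re

/-- Petz Rényi divergence `D_α(ρ‖σ)`, valued in `(-∞,∞]`. -/
noncomputable def DRenyi {A : Type*} [Fintype A] [DecidableEq A] (α : ℝ)
    (ρ σ : Matrix A A ℂ) : EReal :=
  if QRenyi α ρ σ = 0 then ⊤ else (((α - 1)⁻¹ * Real.log (QRenyi α ρ σ) : ℝ) : EReal)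

-- Quantum relative entropy `D(ρ‖σ)`, valued in `(-∞,∞]`.
open Classical in
noncomputable def relEnt {A : Type*} [Fintype A] [DecidableEq A] (ρ σ : Matrix A A ℂ) : EReal :=
  if LinearMap.ker (Matrix.toLin' σ) ≤ LinearMap.ker (Matrix.toLin' ρ) then
    (((ρ * (mlog ρ - mlog σ)).trace).re : EReal)
  else ⊤

/-- Doubly minimized Petz Rényi lautum information. -/
noncomputable def Ldd {A B : Type*} [Fintype A] [DecidableEq A] [Fintype B] [DecidableEq B]
    (α : ℝ) (ρ : Matrix (A × B) (A × B) ℂ) : EReal :=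
  ⨅ (σ : MState A) (τ : MState B), DRenyi α (σ.mat ⊗ₖ τ.mat) ρ

/-- Tumula information. -/
noncomputable def Tum {A B : Type*} [Fintype A] [DecidableEq A] [Fintype B] [DecidableEq B]
    (ρ : Matrix (A × B) (A × B) ℂ) : EReal :=
  ⨅ (σ : MState A) (τ : MState B), relEnt (σ.mat ⊗ₖ τ.mat) ρ

/-- Partial trace over the first factor. -/
noncomputable def ptrA {A B : Type*} [Fintype A] (M : Matrix (A × B) (A × B) ℂ) :
    Matrix B B ℂ :=
  Matrix.of fun b b' => ∑ a, M (a, b) (a, b')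

/-- Partial trace over the second factor. -/
noncomputable def ptrB {A B : Type*} [Fintype B] (M : Matrix (A × B) (A × B) ℂ) :
    Matrix A A ℂ :=
  Matrix.of fun a a' => ∑ b, M (a, b) (a', b)



section aux
variable {P : Type*} [Fintype P] [DecidableEq P]

variable {P : Type*} [Fintype P] [DecidableEq P]

lemma dot_self_eq_one (ψ : P → ℂ) (hψ : ∑ p, ‖ψ p‖ ^ 2 = 1) :
    star ψ ⬝ᵥ ψ = 1 := by
  have : star ψ ⬝ᵥ ψ = ((∑ p, ‖ψ p‖ ^ 2 : ℝ) : ℂ) := by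
    push_cast
    simp only [dotProduct, Pi.star_apply, RCLike.star_def]
    congr 1; ext p
    rw [← Complex.normSq_eq_conj_mul_self]
    norm_cast
    exact (Complex.sq_norm _).symm
  rw [this, hψ]; norm_num

lemma rank_one_of_ker (ψ : P → ℂ) (hψ1 : star ψ ⬝ᵥ ψ = 1)
    (M : Matrix P P ℂ) (hM : M.IsHermitian) (htr : M.trace = 1)
    (hker : ∀ w : P → ℂ, star ψ ⬝ᵥ w = 0 → M.mulVec w = 0) :
    M = Matrix.of fun p q => ψ p * (starRingEnd ℂ) (ψ q) := by
  set φ := M.mulVec ψ with hφ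
  have key : ∀ p q, M p q = (starRingEnd ℂ) (ψ q) * φ p := by
    intro p q
    have hw : star ψ ⬝ᵥ ((Pi.single q 1 : P → ℂ) - ((starRingEnd ℂ) (ψ q)) • ψ) = 0 := by
      rw [dotProduct_sub, dotProduct_smul, hψ1, dotProduct_single]
      simp
    have h0 := hker _ hw
    rw [Matrix.mulVec_sub, Matrix.mulVec_smul, sub_eq_zero] at h0
    have := congrFun h0 p
    simpa using this
  have hc : star ψ ⬝ᵥ φ = 1 := by
    rw [← htr, Matrix.trace]
    simp only [Matrix.diag_apply, dotProduct, Pi.star_apply, RCLike.star_def]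
    congr 1; ext p; rw [key p p]
  have rel : ∀ p q, (starRingEnd ℂ) (ψ q) * φ p = ψ p * (starRingEnd ℂ) (φ q) := by
    intro p q
    have h1 : (starRingEnd ℂ) (M q p) = M p q := by
      conv_rhs => rw [← hM]
      simp [Matrix.conjTranspose_apply]
    rw [key p q, key q p] at h1
    rw [← h1, map_mul, Complex.conj_conj]
  have hφψ : φ = ψ := by
    funext p
    have : φ p * (star ψ ⬝ᵥ ψ) = ψ p * (starRingEnd ℂ) (star ψ ⬝ᵥ φ) := by
      simp only [dotProduct, Pi.star_apply, RCLike.star_def, Finset.mul_sum, map_sum,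
        map_mul, Complex.conj_conj]
      congr 1; ext q
      calc φ p * ((starRingEnd ℂ) (ψ q) * ψ q)
          = ((starRingEnd ℂ) (ψ q) * φ p) * ψ q := by ring
        _ = (ψ p * (starRingEnd ℂ) (φ q)) * ψ q := by rw [rel p q]
        _ = ψ p * (ψ q * (starRingEnd ℂ) (φ q)) := by ring
    rw [hψ1, hc] at this
    simpa using this
  funext p q
  rw [Matrix.of_apply] at *
  rw [key p q, hφψ]; ring


end aux

section aux2
variable {P : Type*} [Fintype P] [DecidableEq P]

open scoped Matrix

lemma ker_cond (ψ : P → ℂ) (M : Matrix P P ℂ)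
    (h : LinearMap.ker (Matrix.toLin' (Matrix.of fun p q => ψ p * (starRingEnd ℂ) (ψ q)))
        ≤ LinearMap.ker (Matrix.toLin' M)) :
    ∀ w, star ψ ⬝ᵥ w = 0 → M.mulVec w = 0 := by
  intro w hw
  have hw' : ∑ q, (starRingEnd ℂ) (ψ q) * w q = 0 := by
    simpa [dotProduct] using hw
  have h0 : (Matrix.of fun p q => ψ p * (starRingEnd ℂ) (ψ q)).mulVec w = 0 := by
    funext p
    show ∑ q, (Matrix.of fun p q => ψ p * (starRingEnd ℂ) (ψ q)) p q * w q = 0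
    simp only [Matrix.of_apply]
    calc ∑ q, ψ p * (starRingEnd ℂ) (ψ q) * w q
        = ψ p * ∑ q, (starRingEnd ℂ) (ψ q) * w q := by
          rw [Finset.mul_sum]; congr 1; funext q; ring
      _ = 0 := by rw [hw', mul_zero]
  have hmem : w ∈ LinearMap.ker (Matrix.toLin'
      (Matrix.of fun p q => ψ p * (starRingEnd ℂ) (ψ q))) := by
    rw [LinearMap.mem_ker, Matrix.toLin'_apply, h0]
  have := h hmem
  rwa [LinearMap.mem_ker, Matrix.toLin'_apply] at this

lemma relEnt_self (ρ : Matrix P P ℂ) : relEnt ρ ρ = 0 := by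
  rw [relEnt, if_pos le_rfl]
  simp

lemma pure_scaled_psd (r : ℝ) (hr : 0 ≤ r) (w : P → ℂ) :
    (Matrix.of fun a a' => (r : ℂ) * (w a * (starRingEnd ℂ) (w a'))).PosSemidef := by
  rw [Matrix.posSemidef_iff_dotProduct_mulVec]
  constructor
  · funext a a'
    simp only [Matrix.conjTranspose_apply, Matrix.of_apply, map_mul, Complex.conj_conj,
      Complex.conj_ofReal, RCLike.star_def]
    ring
  · intro x
    have hval : star x ⬝ᵥ (Matrix.of fun a a' => (r : ℂ) * (w a * (starRingEnd ℂ) (w a'))).mulVec x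
        = (r : ℂ) * ((∑ a, (starRingEnd ℂ) (x a) * w a) *
            (starRingEnd ℂ) (∑ a, (starRingEnd ℂ) (x a) * w a)) := by
      simp only [dotProduct, Matrix.mulVec, Matrix.of_apply, Pi.star_apply,
        RCLike.star_def, map_sum, map_mul, Complex.conj_conj, Finset.mul_sum,
        Finset.sum_mul]
      rw [Finset.sum_comm]
      congr 1; ext a; congr 1; ext a'
      ring
    rw [hval, Complex.mul_conj, ← Complex.ofReal_mul]
    rw [Complex.zero_le_real]
    exact mul_nonneg hr (Complex.normSq_nonneg _)

/-- Pure state from a (not necessarily normalized) nonzero vector. -/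
def pureMState (w : P → ℂ) (hw : ∑ a, Complex.normSq (w a) ≠ 0) : MState P where
  mat := Matrix.of fun a a' => (((∑ a, Complex.normSq (w a))⁻¹ : ℝ) : ℂ)
      * (w a * (starRingEnd ℂ) (w a'))
  posSemidef := pure_scaled_psd _ (inv_nonneg.2 (Finset.sum_nonneg fun a _ => Complex.normSq_nonneg _)) w
  trace_one := by
    have h1 : ∀ a : P, w a * (starRingEnd ℂ) (w a) = ((Complex.normSq (w a) : ℝ) : ℂ) := by
      intro a; rw [Complex.normSq_eq_conj_mul_self]; ring
    rw [Matrix.trace]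
    simp only [Matrix.diag_apply, Matrix.of_apply, h1, ← Finset.mul_sum]
    norm_cast
    exact inv_mul_cancel₀ hw

end aux2

/-- Tumula information of pure states (Theorem 2(c)): it is `0` for product pure states
and `+∞` otherwise. -/
theorem tumula_pure_state {A B : Type*} [Fintype A] [DecidableEq A] [Nonempty A]
    [Fintype B] [DecidableEq B] [Nonempty B]
    (ψ : A × B → ℂ) (hψ : ∑ p : A × B, ‖ψ p‖ ^ 2 = 1)
    (ρ : Matrix (A × B) (A × B) ℂ)
    (hρ : ρ = Matrix.of fun p q => ψ p * (starRingEnd ℂ) (ψ q)) :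
    ((∃ (u : A → ℂ) (v : B → ℂ), ∀ a b, ψ (a, b) = u a * v b) → Tum ρ = 0) ∧
      ((¬ ∃ (u : A → ℂ) (v : B → ℂ), ∀ a b, ψ (a, b) = u a * v b) →
        (∀ (σ : MState A) (τ : MState B), relEnt (σ.mat ⊗ₖ τ.mat) ρ = ⊤) ∧ Tum ρ = ⊤) := by
  classical
  have hψ1 : star ψ ⬝ᵥ ψ = 1 := dot_self_eq_one ψ hψ
  -- key: whenever the kernel condition holds, σ⊗τ must equal ρ
  have main : ∀ (σ : MState A) (τ : MState B),
      LinearMap.ker (Matrix.toLin' ρ) ≤ LinearMap.ker (Matrix.toLin' (σ.mat ⊗ₖ τ.mat)) →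
      σ.mat ⊗ₖ τ.mat = ρ := by
    intro σ τ hk
    have hherm : (σ.mat ⊗ₖ τ.mat).IsHermitian := by
      have hσ := σ.posSemidef.1
      have hτ := τ.posSemidef.1
      funext p q
      obtain ⟨a, b⟩ := p; obtain ⟨a', b'⟩ := q
      simp only [Matrix.conjTranspose_apply, Matrix.kroneckerMap_apply, map_mul,
        RCLike.star_def]
      rw [← hσ.apply a a', ← hτ.apply b b']
      rfl
    have htr : (σ.mat ⊗ₖ τ.mat).trace = 1 := by
      rw [Matrix.trace_kronecker, σ.trace_one, τ.trace_one, mul_one]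
    rw [hρ] at hk
    have := rank_one_of_ker ψ hψ1 _ hherm htr (ker_cond ψ _ hk)
    rw [this, hρ]
  have hψne : ∃ p, ψ p ≠ 0 := by
    by_contra h
    push_neg at h
    have : ψ = 0 := funext h
    rw [this] at hψ
    simp at hψ
  constructor
  · rintro ⟨u, v, huv⟩
    -- normalization facts
    set nu := ∑ a, Complex.normSq (u a) with hnu
    set nv := ∑ b, Complex.normSq (v b) with hnv
    have hprod : nu * nv = 1 := by
      have : ∑ p : A × B, ‖ψ p‖ ^ 2 = nu * nv := by
        rw [hnu, hnv, Finset.sum_mul_sum, Fintype.sum_prod_type]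
        congr 1; ext a; congr 1; ext b
        rw [huv a b, Complex.sq_norm, Complex.normSq_mul]
      rw [← this, hψ]
    have hnu0 : nu ≠ 0 := fun h => by simp [h] at hprod
    have hnv0 : nv ≠ 0 := fun h => by simp [h] at hprod
    set σ := pureMState u hnu0 with hσ
    set τ := pureMState v hnv0 with hτ
    have hst : σ.mat ⊗ₖ τ.mat = ρ := by
      funext p q
      obtain ⟨a, b⟩ := p; obtain ⟨a', b'⟩ := q
      simp only [hσ, hτ, pureMState, Matrix.kroneckerMap_apply, Matrix.of_apply, hρ]
      rw [huv a b, huv a' b', ← hnu, ← hnv]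
      rw [show ((nu⁻¹ : ℝ) : ℂ) * (u a * (starRingEnd ℂ) (u a')) *
          (((nv⁻¹ : ℝ) : ℂ) * (v b * (starRingEnd ℂ) (v b')))
          = (((nu⁻¹ * nv⁻¹ : ℝ)) : ℂ) * ((u a * v b) *
            ((starRingEnd ℂ) (u a') * (starRingEnd ℂ) (v b'))) by push_cast; ring]
      rw [← mul_inv, hprod, map_mul]
      norm_num
    -- each value is 0 or ⊤
    have hge : (0 : EReal) ≤ Tum ρ := by
      refine le_iInf fun σ' => le_iInf fun τ' => ?_
      by_cases hk : LinearMap.ker (Matrix.toLin' ρ)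
          ≤ LinearMap.ker (Matrix.toLin' (σ'.mat ⊗ₖ τ'.mat))
      · rw [main σ' τ' hk, relEnt_self]
      · rw [relEnt, if_neg (fun h => hk ?_)]
        · exact le_top
        · exact h
    have hle : Tum ρ ≤ 0 := by
      refine iInf_le_of_le σ (iInf_le_of_le τ ?_)
      rw [hst, relEnt_self]
    exact le_antisymm hle hge
  · intro hnp
    have hall : ∀ (σ : MState A) (τ : MState B), relEnt (σ.mat ⊗ₖ τ.mat) ρ = ⊤ := by
      intro σ τ
      rw [relEnt, if_neg]
      intro hk
      have hst := main σ τ hk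
      obtain ⟨⟨a₀, b₀⟩, hp0⟩ := hψne
      apply hnp
      refine ⟨fun a => σ.mat a a₀, fun b => τ.mat b b₀ * ((starRingEnd ℂ) (ψ (a₀, b₀)))⁻¹,
        fun a b => ?_⟩
      have h1 : σ.mat a a₀ * τ.mat b b₀ = ψ (a, b) * (starRingEnd ℂ) (ψ (a₀, b₀)) := by
        have := congrFun (congrFun hst (a, b)) (a₀, b₀)
        simpa [hρ, Matrix.kroneckerMap_apply] using this
      have hc0 : (starRingEnd ℂ) (ψ (a₀, b₀)) ≠ 0 := by
        simpa using hp0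
      field_simp
      exact h1.symm
    refine ⟨hall, ?_⟩
    rw [Tum]
    simp only [iInf_eq_top]
    exact hall

end
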